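/- Let W ∈ ℝ^{n×q} have full row rank (rank(W) = n < q), let i ∈ {1,…,n}, and let W_{∼i} ∈ ℝ^{(n−1)×q} be W with its i-th row removed. Define P_i = (W† e_i e_iᵀ W†ᵀ)/(e_iᵀ G_W e_i) ∈ ℝ^{q×q}. Then (W_{∼i})† W_{∼i} = (I_q − P_i) W† W. -/

import Mathlib

open Matrix BigOperators

noncomputable section

/-- `B` is the Moore–Penrose pseudoinverse of `A`. -/
def IsMPInv {m n : Type*} [Fintype m] [Fintype n]
    (A : Matrix m n ℝ) (B : Matrix n m ℝ) : Prop :=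
  A * B * A = A ∧ B * A * B = B ∧ (A * B)ᵀ = A * B ∧ (B * A)ᵀ = B * A

/-- Remove the `i`-th row of a matrix. -/
def dropRow {n q : ℕ} (A : Matrix (Fin (n + 1)) (Fin q) ℝ) (i : Fin (n + 1)) :
    Matrix (Fin n) (Fin q) ℝ :=
  Matrix.of fun j k => A (i.succAbove j) k

/-- Helper: a square real matrix of full rank is a unit. -/
lemma aux_isUnit_of_rank_eq_card {m : ℕ} {M : Matrix (Fin m) (Fin m) ℝ}
    (h : M.rank = m) : IsUnit M := by
  rw [← Matrix.mulVec_surjective_iff_isUnit]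
  have hr : LinearMap.range M.mulVecLin = ⊤ := by
    apply Submodule.eq_top_of_finrank_eq
    have : Module.finrank ℝ (LinearMap.range M.mulVecLin) = M.rank := rfl
    rw [this, h, Module.finrank_fin_fun]
  intro y
  obtain ⟨x, hx⟩ := LinearMap.range_eq_top.mp hr y
  exact ⟨x, hx⟩

/-- Helper: if `B` is an MP inverse of `A` and `G` is a right inverse of `A * Aᵀ`,
then `B = Aᵀ * G`. -/
lemma aux_mp_eq {m k : Type*} [Fintype m] [Fintype k] [DecidableEq m]
    {A : Matrix m k ℝ} {B : Matrix k m ℝ} {G : Matrix m m ℝ}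
    (h : IsMPInv A B) (h1 : A * Aᵀ * G = 1) : B = Aᵀ * G := by
  obtain ⟨ha, hb, hc, hd⟩ := h
  have hAAtG : A * (Aᵀ * G) = 1 := by rw [← Matrix.mul_assoc]; exact h1
  have hAB : A * B = 1 := by
    calc A * B = A * B * (A * (Aᵀ * G)) := by rw [hAAtG, Matrix.mul_one]
      _ = (A * B * A) * (Aᵀ * G) := by rw [Matrix.mul_assoc (A * B) A (Aᵀ * G)]
      _ = A * (Aᵀ * G) := by rw [ha]
      _ = 1 := hAAtG
  have h5 : A * (B * A) = A := by rw [← Matrix.mul_assoc, ha]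
  have hT : B * A * Aᵀ = Aᵀ := by
    calc B * A * Aᵀ = (B * A)ᵀ * Aᵀ := by rw [hd]
      _ = (A * (B * A))ᵀ := (transpose_mul A (B * A)).symm
      _ = Aᵀ := by rw [h5]
  calc B = B * (A * (Aᵀ * G)) := by rw [hAAtG, Matrix.mul_one]
    _ = B * A * Aᵀ * G := by rw [Matrix.mul_assoc, Matrix.mul_assoc]
    _ = Aᵀ * G := by rw [hT]

lemma aux_mul_vecMulVec {a b c : Type*} [Fintype a] [Fintype b] [Fintype c]
    (M : Matrix a b ℝ) (v : b → ℝ) (w : c → ℝ) :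
    M * vecMulVec v w = vecMulVec (M *ᵥ v) w := by
  ext x y
  simp only [mul_apply, vecMulVec_apply, mulVec, dotProduct]
  rw [Finset.sum_mul]
  exact Finset.sum_congr rfl fun k _ => by ring

lemma aux_vecMulVec_mul {a b c : Type*} [Fintype a] [Fintype b] [Fintype c]
    (v : a → ℝ) (w : b → ℝ) (M : Matrix b c ℝ) :
    vecMulVec v w * M = vecMulVec v (w ᵥ* M) := by
  ext x y
  simp only [mul_apply, vecMulVec_apply, vecMul, dotProduct]
  rw [Finset.mul_sum]
  exact Finset.sum_congr rfl fun k _ => by ring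

lemma aux_vecMulVec_mul_vecMulVec {a b c : Type*} [Fintype a] [Fintype b] [Fintype c]
    (u v x y : b → ℝ) (u' : a → ℝ) (y' : c → ℝ) :
    vecMulVec u' v * vecMulVec x y' = (v ⬝ᵥ x) • vecMulVec u' y' := by
  ext r s
  simp only [mul_apply, vecMulVec_apply, Matrix.smul_apply, smul_eq_mul, dotProduct]
  rw [Finset.sum_mul]
  exact Finset.sum_congr rfl fun k _ => by ring

/-- A symmetric idempotent real matrix with zero trace is zero. -/
lemma aux_eq_zero_of_symm_idem_trace {k : Type*} [Fintype k] [DecidableEq k]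
    {R : Matrix k k ℝ} (hs : Rᵀ = R) (hi : R * R = R) (ht : trace R = 0) : R = 0 := by
  have h2 : ∑ l, ∑ j, R j l * R j l = 0 := by
    have h0 : trace (Rᵀ * R) = 0 := by rw [hs, hi, ht]
    simpa [Matrix.trace, Matrix.diag, mul_apply] using h0
  ext j l
  have hnn : ∀ l' ∈ Finset.univ, (0:ℝ) ≤ ∑ j', R j' l' * R j' l' :=
    fun l' _ => Finset.sum_nonneg fun j' _ => mul_self_nonneg _
  have h3 := (Finset.sum_eq_zero_iff_of_nonneg hnn).mp h2 l (Finset.mem_univ l)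
  have h4 := (Finset.sum_eq_zero_iff_of_nonneg
    (fun j' _ => mul_self_nonneg (R j' l))).mp h3 j (Finset.mem_univ j)
  simpa using mul_self_eq_zero.mp h4

theorem loo_row_space_projection
    {n q : ℕ}
    (W : Matrix (Fin (n + 1)) (Fin q) ℝ) (hW : W.rank = n + 1) (hnq : n + 1 < q)
    (i : Fin (n + 1))
    (Wp : Matrix (Fin q) (Fin (n + 1)) ℝ) (hWp : IsMPInv W Wp)
    (GW : Matrix (Fin (n + 1)) (Fin (n + 1)) ℝ) (hGW : IsMPInv (W * Wᵀ) GW)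
    (Wdp : Matrix (Fin q) (Fin n) ℝ) (hWdp : IsMPInv (dropRow W i) Wdp)
    -- `P_i = (W† e_i e_iᵀ W†ᵀ)/(e_iᵀ G_W e_i)`
    (P : Matrix (Fin q) (Fin q) ℝ)
    (hP : P = (GW i i)⁻¹ • vecMulVec (Wpᵀ i) (Wpᵀ i)) :
    Wdp * dropRow W i = ((1 : Matrix (Fin q) (Fin q) ℝ) - P) * (Wp * W) := by
  classical
  set D : Matrix (Fin n) (Fin q) ℝ := dropRow W i with hDdef
  -- Invertibility of W * Wᵀ
  have hSrank : (W * Wᵀ).rank = n + 1 := by rw [rank_self_mul_transpose, hW]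
  have hSu : IsUnit (W * Wᵀ) := aux_isUnit_of_rank_eq_card hSrank
  have hSdet : IsUnit (W * Wᵀ).det := (isUnit_iff_isUnit_det _).mp hSu
  set G : Matrix (Fin (n+1)) (Fin (n+1)) ℝ := (W * Wᵀ)⁻¹ with hGdef
  have h1 : (W * Wᵀ) * G = 1 := mul_nonsing_inv _ hSdet
  have h2 : G * (W * Wᵀ) = 1 := nonsing_inv_mul _ hSdet
  have hGsym : Gᵀ = G := by
    rw [hGdef, transpose_nonsing_inv, transpose_mul, transpose_transpose]
  -- Explicit form of Wp and GW
  have hWpe : Wp = Wᵀ * G := aux_mp_eq hWp h1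
  have hGWe : GW = G := by
    obtain ⟨g1, _, _, _⟩ := hGW
    have e1 : G * (W * Wᵀ * GW * (W * Wᵀ)) * G = GW := by
      rw [← Matrix.mul_assoc G (W * Wᵀ * GW) (W * Wᵀ)]
      rw [← Matrix.mul_assoc G (W * Wᵀ) GW, h2, one_mul]
      rw [Matrix.mul_assoc GW (W * Wᵀ) G, h1, mul_one]
    calc GW = G * (W * Wᵀ * GW * (W * Wᵀ)) * G := e1.symm
      _ = G * (W * Wᵀ) * G := by rw [g1]
      _ = G := by rw [h2, one_mul]
  -- Rows of W are linearly independent; D has full row rank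
  have hrow : LinearIndependent ℝ (fun a : Fin (n+1) => W a) := by
    rw [linearIndependent_iff_card_eq_finrank_span]
    have := W.rank_eq_finrank_span_row
    rw [hW] at this
    simp [Set.finrank, ← this]
    exact this
  have hrowD : LinearIndependent ℝ (fun j : Fin n => D j) := by
    have : (fun j : Fin n => D j) = (fun a : Fin (n+1) => W a) ∘ i.succAbove := rfl
    rw [this]
    exact hrow.comp _ (Fin.succAbove_right_injective)
  have hDrank : D.rank = n := by
    have := hrowD.rank_matrix
    simpa [hDdef, dropRow] using this
  have hTu : IsUnit (D * Dᵀ) := by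
    apply aux_isUnit_of_rank_eq_card
    rw [rank_self_mul_transpose, hDrank]
  have hTdet : IsUnit (D * Dᵀ).det := (isUnit_iff_isUnit_det _).mp hTu
  set B : Matrix (Fin n) (Fin n) ℝ := (D * Dᵀ)⁻¹ with hBdef
  have h3 : (D * Dᵀ) * B = 1 := mul_nonsing_inv _ hTdet
  have h4 : B * (D * Dᵀ) = 1 := nonsing_inv_mul _ hTdet
  have hBsym : Bᵀ = B := by
    rw [hBdef, transpose_nonsing_inv, transpose_mul, transpose_transpose]
  have hWdpe : Wdp = Dᵀ * B := aux_mp_eq hWdp h3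
  -- the vector v
  set v : Fin q → ℝ := fun k => (Wᵀ * G) k i with hvdef
  have hv : Wpᵀ i = v := by funext k; simp [hWpe, hvdef]
  have h1' : W * (Wᵀ * G) = 1 := by rw [← Matrix.mul_assoc]; exact h1
  have hWv : W *ᵥ v = fun a => if a = i then (1:ℝ) else 0 := by
    funext a
    have h := congrFun (congrFun h1' a) i
    simp only [mul_apply, Matrix.one_apply] at h
    simpa [mulVec, dotProduct, hvdef, eq_comm, mul_apply] using h
  have hDv : D *ᵥ v = 0 := by
    funext j
    have h := congrFun hWv (i.succAbove j)
    have hne : i.succAbove j ≠ i := Fin.succAbove_ne i j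
    simp only [hne, if_false] at h
    have : (D *ᵥ v) j = (W *ᵥ v) (i.succAbove j) := by
      simp [mulVec, dotProduct, hDdef, dropRow]
    rw [this, h]; rfl
  -- c := G i i
  have hGid : (Wᵀ * G)ᵀ * (Wᵀ * G) = G := by
    rw [transpose_mul, transpose_transpose, hGsym]
    rw [Matrix.mul_assoc G W (Wᵀ * G), ← Matrix.mul_assoc W Wᵀ G, h1, mul_one]
  have hc : v ⬝ᵥ v = G i i := by
    have h := congrFun (congrFun hGid i) i
    simpa [mul_apply, dotProduct, hvdef, mul_comm] using h
  have hc0 : G i i ≠ 0 := by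
    intro h0
    have hvv : v ⬝ᵥ v = 0 := hc.trans h0
    have hv0 : ∀ k, v k = 0 := by
      intro k
      have := (Finset.sum_eq_zero_iff_of_nonneg
        (fun k' (_ : k' ∈ Finset.univ) => mul_self_nonneg (v k'))).mp hvv k (Finset.mem_univ k)
      exact mul_self_eq_zero.mp this
    have h := congrFun hWv i
    simp [mulVec, dotProduct, hv0] at h
  -- the three projections
  set J : Matrix (Fin q) (Fin q) ℝ := Wᵀ * G * W with hJdef
  set K : Matrix (Fin q) (Fin q) ℝ := Dᵀ * B * D with hKdef
  set P' : Matrix (Fin q) (Fin q) ℝ := (G i i)⁻¹ • vecMulVec v v with hP'def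
  have hJsym : Jᵀ = J := by
    rw [hJdef, transpose_mul, transpose_mul, transpose_transpose, hGsym, Matrix.mul_assoc]
  have hKsym : Kᵀ = K := by
    rw [hKdef, transpose_mul, transpose_mul, transpose_transpose, hBsym, Matrix.mul_assoc]
  have hPvv : (vecMulVec v v)ᵀ = vecMulVec v v := by
    ext x y; simp [vecMulVec_apply, mul_comm]
  have hPsym : P'ᵀ = P' := by rw [hP'def, transpose_smul, hPvv]
  -- multiplication facts
  have hWJ : W * J = W := by
    rw [hJdef, ← Matrix.mul_assoc, ← Matrix.mul_assoc, h1, Matrix.one_mul]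
  have hJJ : J * J = J := by
    conv_lhs => rw [hJdef, Matrix.mul_assoc (Wᵀ * G) W J, hWJ]
  have hDK : D * K = D := by
    rw [hKdef, ← Matrix.mul_assoc, ← Matrix.mul_assoc, h3, Matrix.one_mul]
  have hKK : K * K = K := by
    conv_lhs => rw [hKdef, Matrix.mul_assoc (Dᵀ * B) D K, hDK]
  have hDJ : D * J = D := by
    ext j l
    have h := congrFun (congrFun hWJ (i.succAbove j)) l
    simp only [mul_apply] at h ⊢
    simpa [hDdef, dropRow] using h
  have hKJ : K * J = K := by
    conv_lhs => rw [hKdef, Matrix.mul_assoc (Dᵀ * B) D J, hDJ]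
  have hJK : J * K = K := by
    calc J * K = (Kᵀ * Jᵀ)ᵀ := by rw [transpose_mul, transpose_transpose, transpose_transpose]
      _ = (K * J)ᵀ := by rw [hKsym, hJsym]
      _ = Kᵀ := by rw [hKJ]
      _ = K := hKsym
  have hJv : J *ᵥ v = v := by
    have hWGe : ((Wᵀ * G) *ᵥ fun a => if a = i then (1:ℝ) else 0) = v := by
      funext k
      simp [mulVec, dotProduct, hvdef, mul_ite, Finset.sum_ite_eq']
    rw [hJdef, ← Matrix.mulVec_mulVec, hWv, hWGe]
  have hvJ : v ᵥ* J = v := by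
    rw [← hJsym, vecMul_transpose, hJv]
  have hPJ : P' * J = P' := by
    rw [hP'def, smul_mul, aux_vecMulVec_mul, hvJ]
  have hJP : J * P' = P' := by
    calc J * P' = (P'ᵀ * Jᵀ)ᵀ := by rw [transpose_mul, transpose_transpose, transpose_transpose]
      _ = (P' * J)ᵀ := by rw [hPsym, hJsym]
      _ = P'ᵀ := by rw [hPJ]
      _ = P' := hPsym
  have hvK : v ᵥ* K = 0 := by
    rw [← hKsym, vecMul_transpose, hKdef, ← Matrix.mulVec_mulVec, hDv, Matrix.mulVec_zero]
  have hPK : P' * K = 0 := by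
    rw [hP'def, smul_mul, aux_vecMulVec_mul, hvK]
    ext x y; simp [vecMulVec_apply]
  have hKP : K * P' = 0 := by
    calc K * P' = (P'ᵀ * Kᵀ)ᵀ := by rw [transpose_mul, transpose_transpose, transpose_transpose]
      _ = (P' * K)ᵀ := by rw [hPsym, hKsym]
      _ = (0 : Matrix (Fin q) (Fin q) ℝ)ᵀ := by rw [hPK]
      _ = 0 := transpose_zero
  have hPP : P' * P' = P' := by
    rw [hP'def, smul_mul, Matrix.mul_smul, aux_vecMulVec_mul_vecMulVec v v v v v v, hc]
    rw [smul_smul, smul_smul, mul_assoc, inv_mul_cancel₀ hc0, mul_one]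
  -- traces
  have hJtr : trace J = (n:ℝ) + 1 := by
    rw [hJdef, Matrix.mul_assoc, trace_mul_comm, Matrix.mul_assoc, h2, trace_one]
    simp
  have hKtr : trace K = (n:ℝ) := by
    rw [hKdef, Matrix.mul_assoc, trace_mul_comm, Matrix.mul_assoc, h4, trace_one]
    simp
  have hPtr : trace P' = 1 := by
    have htvv : trace (vecMulVec v v) = v ⬝ᵥ v := by
      simp [Matrix.trace, Matrix.diag, vecMulVec_apply, dotProduct]
    rw [hP'def, trace_smul, htvv, hc, smul_eq_mul, inv_mul_cancel₀ hc0]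
  -- the residual R
  have hRsym : (J - P' - K)ᵀ = J - P' - K := by
    rw [transpose_sub, transpose_sub, hJsym, hPsym, hKsym]
  have hRR : (J - P' - K) * (J - P' - K) = J - P' - K := by
    simp only [Matrix.sub_mul, Matrix.mul_sub, hJJ, hJP, hJK, hPJ, hPP, hPK, hKJ, hKP, hKK,
      sub_zero]
    abel
  have hRtr : trace (J - P' - K) = 0 := by
    rw [trace_sub, trace_sub, hJtr, hPtr, hKtr]; ring
  have hR0 : J - P' - K = 0 := aux_eq_zero_of_symm_idem_trace hRsym hRR hRtr
  -- conclude
  rw [hP, hGWe, hv, hWpe, hWdpe]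
  calc Dᵀ * B * D = K := rfl
    _ = J - P' := (sub_eq_zero.mp hR0).symm
    _ = (1 - P') * J := by rw [Matrix.sub_mul, Matrix.one_mul, hPJ]
    _ = (1 - (G i i)⁻¹ • vecMulVec v v) * (Wᵀ * G * W) := rfl
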